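/- Let p and q be distinct primes and let V be a nontrivial simple module over the group algebra 𝔽_p[ℤ/q]. Then exp(V ⋊ ℤ/q) = pq, and the semidirect product V ⋊ ℤ/q contains no element of order pq. -/

import Mathlib

/-- The multiplicative group structure on `AddAut V` (composition), as in the older Mathlib. -/
instance AddAut.groupOfComp (V : Type*) [Add V] : Group (AddAut V) where
  mul g h := AddEquiv.trans h g
  one := AddEquiv.refl _
  inv := AddEquiv.symm
  mul_assoc _ _ _ := rfl
  one_mul _ := rfl
  mul_one _ := rfl
  inv_mul_cancel := AddEquiv.self_trans_symm

/-- Package an action by additive automorphisms as an action by multiplicative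
automorphisms of `Multiplicative V`, as needed to form a semidirect product. -/
def MonoidHom.toMulAutMultiplicative {H : Type*} [Monoid H] {V : Type*} [AddGroup V]
    (ρ : H →* AddAut V) : H →* MulAut (Multiplicative V) where
  toFun g := AddEquiv.toMultiplicative (ρ g)
  map_one' := by ext v; simp [map_one]; rfl
  map_mul' g h := by ext v; simp; rfl

section Aux

variable {p q : ℕ} (hp : p.Prime) (hq : q.Prime)
    {V : Type*} [AddCommGroup V] [Module (ZMod p) V]
    (ρ : Multiplicative (ZMod q) →* AddAut V)

/-- power formula in the semidirect product -/
lemma sdp_pow (x : Multiplicative V ⋊[ρ.toMulAutMultiplicative] Multiplicative (ZMod q))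
    (n : ℕ) :
    x ^ n = ⟨Multiplicative.ofAdd (∑ i ∈ Finset.range n,
        ρ (x.right ^ i) (Multiplicative.toAdd x.left)), x.right ^ n⟩ := by
  induction n with
  | zero => ext <;> simp
  | succ n ih =>
    rw [pow_succ, ih]
    ext
    · show Multiplicative.ofAdd (∑ i ∈ Finset.range n,
          ρ (x.right ^ i) (Multiplicative.toAdd x.left)) *
          (ρ.toMulAutMultiplicative (x.right ^ n)) x.left = _
      rw [Finset.sum_range_succ, ofAdd_add]
      rfl
    · show x.right ^ n * x.right = x.right ^ (n + 1)
      rw [pow_succ]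

end Aux


/-- For `g ≠ 1`, the "norm" sum vanishes on all of `V`. -/
lemma norm_sum_zero {p q : ℕ} (hp : p.Prime) (hq : q.Prime)
    {V : Type*} [AddCommGroup V] [Module (ZMod p) V]
    (ρ : Multiplicative (ZMod q) →* AddAut V)
    (hnontrivial : ∃ (g : Multiplicative (ZMod q)) (v : V), ρ g v ≠ v)
    (hsimple : ∀ W : Submodule (ZMod p) V,
      (∀ (g : Multiplicative (ZMod q)), ∀ v ∈ W, ρ g v ∈ W) → W = ⊥ ∨ W = ⊤)
    (g : Multiplicative (ZMod q)) (hg : g ≠ 1) (v : V) :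
    ∑ i ∈ Finset.range q, ρ (g ^ i) v = 0 := by
  haveI : Fact q.Prime := ⟨hq⟩
  have hgq : g ^ q = 1 := by
    have : q • Multiplicative.toAdd g = 0 := by
      rw [nsmul_eq_mul, ZMod.natCast_self, zero_mul]
    rw [← ofAdd_toAdd g, ← ofAdd_nsmul, this, ofAdd_zero]
  -- ρ g ≠ 1
  have hρg : ρ g ≠ 1 := by
    intro h1
    obtain ⟨g₀, v₀, hv₀⟩ := hnontrivial
    have ha : Multiplicative.toAdd g ≠ 0 := by
      simpa using hg
    set k : ℕ := (Multiplicative.toAdd g₀ * (Multiplicative.toAdd g)⁻¹).val with hk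
    have hgk : g ^ k = g₀ := by
      have : (k : ZMod q) • Multiplicative.toAdd g = Multiplicative.toAdd g₀ := by
        rw [hk, ZMod.natCast_val, ZMod.cast_id, smul_eq_mul, inv_mul_cancel_right₀ ha]
      rw [← ofAdd_toAdd g, ← ofAdd_nsmul]
      rw [← Nat.cast_smul_eq_nsmul (ZMod q), this, ofAdd_toAdd]
    have : ρ g₀ = 1 := by rw [← hgk, map_pow, h1, one_pow]
    exact hv₀ (by rw [this]; rfl)
  obtain ⟨w, hw⟩ : ∃ w : V, ρ g w ≠ w := by
    by_contra hcon
    push_neg at hcon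
    exact hρg (AddEquiv.ext fun w => (hcon w).trans rfl)
  -- the norm map as a linear map
  set N : V →ₗ[ZMod p] V :=
    (∑ i ∈ Finset.range q, ((ρ (g ^ i)).toAddMonoidHom)).toZModLinearMap p with hN
  have hNapp : ∀ u : V, N u = ∑ i ∈ Finset.range q, ρ (g ^ i) u := by
    intro u
    simp [hN, AddMonoidHom.toZModLinearMap]
  set W : Submodule (ZMod p) V := LinearMap.ker N with hW
  have hinv : ∀ (h : Multiplicative (ZMod q)), ∀ u ∈ W, ρ h u ∈ W := by
    intro h u hu
    have hu' : N u = 0 := hu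
    have : N (ρ h u) = ρ h (N u) := by
      rw [hNapp, hNapp, map_sum]
      refine Finset.sum_congr rfl fun i _ => ?_
      have : ρ (g ^ i) (ρ h u) = ρ (g ^ i * h) u := by
        rw [map_mul]; rfl
      rw [this, mul_comm, map_mul]; rfl
    have : N (ρ h u) = 0 := by rw [this, hu', map_zero]
    exact this
  have hmem : ρ g w - w ∈ W := by
    show N (ρ g w - w) = 0
    rw [hNapp]
    have : ∀ i ∈ Finset.range q, ρ (g ^ i) (ρ g w - w)
        = ρ (g ^ (i + 1)) w - ρ (g ^ i) w := by
      intro i _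
      rw [map_sub]
      congr 1
      rw [pow_succ, map_mul]
      rfl
    rw [Finset.sum_congr rfl this, Finset.sum_range_sub (fun i => ρ (g ^ i) w)]
    rw [hgq, pow_zero, map_one]
    simp
  have hWne : W ≠ ⊥ := by
    intro hbot
    rw [hbot] at hmem
    rw [Submodule.mem_bot, sub_eq_zero] at hmem
    exact hw hmem
  have hWtop : W = ⊤ := (hsimple W hinv).resolve_left hWne
  have : v ∈ W := hWtop ▸ Submodule.mem_top
  rw [← hNapp]; exact this

/-- **Lemma.** Let `p ≠ q` be primes and let `V` be a nontrivial simple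
`𝔽_p[ℤ/q]`-module. Then `exp(V ⋊ ℤ/q) = p * q`, and `V ⋊ ℤ/q` contains no element
of order `p * q`. -/
theorem exponent_semidirectProduct_eq_and_no_element_of_order
    (p q : ℕ) (hp : p.Prime) (hq : q.Prime) (hpq : p ≠ q)
    (V : Type*) [AddCommGroup V] [Module (ZMod p) V] [Finite V] [Nontrivial V]
    (ρ : Multiplicative (ZMod q) →* AddAut V)
    (hnontrivial : ∃ (g : Multiplicative (ZMod q)) (v : V), ρ g v ≠ v)
    (hsimple : ∀ W : Submodule (ZMod p) V,
      (∀ (g : Multiplicative (ZMod q)), ∀ v ∈ W, ρ g v ∈ W) → W = ⊥ ∨ W = ⊤) :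
    Monoid.exponent (Multiplicative V ⋊[ρ.toMulAutMultiplicative] Multiplicative (ZMod q))
        = p * q ∧
      ∀ x : Multiplicative V ⋊[ρ.toMulAutMultiplicative] Multiplicative (ZMod q),
        orderOf x ≠ p * q := by
  haveI : Fact q.Prime := ⟨hq⟩
  set G := Multiplicative V ⋊[ρ.toMulAutMultiplicative] Multiplicative (ZMod q) with hG
  -- elements with trivial right component have p-th power 1
  have keyp : ∀ x : G, x.right = 1 → x ^ p = 1 := by
    intro x hx
    rw [sdp_pow, hx]
    have : ∑ i ∈ Finset.range p, ρ (1 ^ i) (Multiplicative.toAdd x.left) = 0 := by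
      have : ∀ i ∈ Finset.range p, ρ ((1 : Multiplicative (ZMod q)) ^ i)
          (Multiplicative.toAdd x.left) = Multiplicative.toAdd x.left := by
        intro i _; rw [one_pow, map_one]; rfl
      rw [Finset.sum_congr rfl this, Finset.sum_const, Finset.card_range,
        ← Nat.cast_smul_eq_nsmul (ZMod p), ZMod.natCast_self, zero_smul]
    rw [this]
    ext <;> simp
  -- elements with nontrivial right component have q-th power 1
  have keyq : ∀ x : G, x.right ≠ 1 → x ^ q = 1 := by
    intro x hx
    rw [sdp_pow]
    rw [norm_sum_zero hp hq ρ hnontrivial hsimple x.right hx]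
    have hgq : x.right ^ q = 1 := by
      have : q • Multiplicative.toAdd x.right = 0 := by
        rw [nsmul_eq_mul, ZMod.natCast_self, zero_mul]
      rw [← ofAdd_toAdd x.right, ← ofAdd_nsmul, this, ofAdd_zero]
    rw [hgq]
    ext <;> simp
  -- every order divides p or q
  have horder : ∀ x : G, orderOf x ∣ p ∨ orderOf x ∣ q := by
    intro x
    by_cases hx : x.right = 1
    · exact Or.inl (orderOf_dvd_of_pow_eq_one (keyp x hx))
    · exact Or.inr (orderOf_dvd_of_pow_eq_one (keyq x hx))
  have hppos := hp.pos
  have hqpos := hq.pos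
  have hp1 := hp.one_lt
  have hq1 := hq.one_lt
  -- exponent divides p * q
  have hdvd : Monoid.exponent G ∣ p * q := by
    apply Monoid.exponent_dvd_of_forall_pow_eq_one
    intro x
    rcases horder x with h | h
    · exact orderOf_dvd_iff_pow_eq_one.mp (h.trans (dvd_mul_right p q))
    · exact orderOf_dvd_iff_pow_eq_one.mp (h.trans (dvd_mul_left q p))
  -- an element of order p
  obtain ⟨v₀, hv₀⟩ := exists_ne (0 : V)
  have hvord : addOrderOf v₀ = p := by
    have hdvd' : addOrderOf v₀ ∣ p := by
      rw [addOrderOf_dvd_iff_nsmul_eq_zero, ← Nat.cast_smul_eq_nsmul (ZMod p),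
        ZMod.natCast_self, zero_smul]
    rcases (Nat.Prime.eq_one_or_self_of_dvd hp _ hdvd') with h | h
    · exact absurd (AddMonoid.addOrderOf_eq_one_iff.mp h) hv₀
    · exact h
  have hpd : p ∣ Monoid.exponent G := by
    have : orderOf (SemidirectProduct.inl (Multiplicative.ofAdd v₀) : G) = p := by
      rw [orderOf_injective SemidirectProduct.inl SemidirectProduct.inl_injective,
        orderOf_ofAdd_eq_addOrderOf, hvord]
    rw [← this]
    exact Monoid.order_dvd_exponent _
  have hqd : q ∣ Monoid.exponent G := by
    have : orderOf (SemidirectProduct.inr (Multiplicative.ofAdd (1 : ZMod q)) : G) = q := by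
      rw [orderOf_injective SemidirectProduct.inr SemidirectProduct.inr_injective,
        orderOf_ofAdd_eq_addOrderOf, ZMod.addOrderOf_one]
    have h2 := Monoid.order_dvd_exponent
      (SemidirectProduct.inr (Multiplicative.ofAdd (1 : ZMod q)) : G)
    rwa [this] at h2
  have hco : Nat.Coprime p q := (Nat.coprime_primes hp hq).mpr hpq
  have hexp : Monoid.exponent G = p * q :=
    Nat.dvd_antisymm hdvd (Nat.Coprime.mul_dvd_of_dvd_of_dvd hco hpd hqd)
  refine ⟨hexp, fun x hx => ?_⟩
  rcases horder x with h | h <;> rw [hx] at h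
  · have := Nat.le_of_dvd hppos h
    nlinarith
  · have := Nat.le_of_dvd hqpos h
    nlinarith
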